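/- Every quadratic form on three generators is a product plus a square: for all a, b, c, d, e, f ∈ k there exist degree-one elements L1, L2, L3 of S such that Q = L1·L2 + L3² in S; equivalently, there exist p1, p2, p3, q1, q2, q3, r1, r2, r3 ∈ k satisfying p1q1 + r1² = a, p2q2 + r2² = b, p3q3 + r3² = c, p1q2 + μ12·p2q1 + (1+μ12)·r1r2 = 2d, p1q3 + μ13·p3q1 + (1+μ13)·r1r3 = 2e, and p2q3 + μ23·p3q2 + (1+μ23)·r2r3 = 2f. -/

import Mathlib

lemma mySqrt {k : Type*} [Field k] [IsAlgClosed k] (x : k) : ∃ r : k, r ^ 2 = x :=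
  IsAlgClosed.exists_pow_nat_eq x zero_lt_two

lemma quadRoot {k : Type*} [Field k] [IsAlgClosed k] (h2 : (2:k) ≠ 0)
    (A B C : k) (hA : A ≠ 0) : ∃ x : k, A * x ^ 2 + B * x + C = 0 := by
  obtain ⟨s, hs⟩ := mySqrt (B ^ 2 - 4 * A * C)
  refine ⟨(-B + s) / (2 * A), ?_⟩
  field_simp
  ring_nf
  linear_combination hs

lemma quadOrLinRoot {k : Type*} [Field k] [IsAlgClosed k] (h2 : (2:k) ≠ 0)
    (A B C : k) (h : A ≠ 0 ∨ B ≠ 0) : ∃ x : k, A * x ^ 2 + B * x + C = 0 := by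
  rcases h with hA | hB
  · exact quadRoot h2 A B C hA
  · by_cases hA : A = 0
    · refine ⟨-C / B, ?_⟩
      subst hA; field_simp; ring
    · exact quadRoot h2 A B C hA

abbrev Sol {k : Type*} [Field k] (μ12 μ13 μ23 a b c d e f : k) : Prop :=
    ∃ p1 p2 p3 q1 q2 q3 r1 r2 r3 : k,
      p1 * q1 + r1 ^ 2 = a ∧
      p2 * q2 + r2 ^ 2 = b ∧
      p3 * q3 + r3 ^ 2 = c ∧
      p1 * q2 + μ12 * p2 * q1 + (1 + μ12) * r1 * r2 = 2 * d ∧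
      p1 * q3 + μ13 * p3 * q1 + (1 + μ13) * r1 * r3 = 2 * e ∧
      p2 * q3 + μ23 * p3 * q2 + (1 + μ23) * r2 * r3 = 2 * f

/-- Plan B: r3 = 0, p3 a root of the `c`-quadratic, with a usable linear slot. -/
lemma planB {k : Type*} [Field k] [IsAlgClosed k]
    (μ12 μ13 μ23 a b c d e f : k) (p3 : k)
    (hroot : μ13 * a * p3 ^ 2 - 2 * e * p3 + c = 0)
    (hM : 2 * e - (μ13 + μ12 * μ23) * a * p3 ≠ 0 ∨ 2 * μ23 * d * p3 = 2 * f) :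
    Sol μ12 μ13 μ23 a b c d e f := by
  rcases hM with hM | hres
  · obtain ⟨p2, hp2⟩ : ∃ p2 : k,
        p2 * (2 * e - (μ13 + μ12 * μ23) * a * p3) = 2 * f - 2 * μ23 * d * p3 :=
      ⟨_, div_mul_cancel₀ _ hM⟩
    obtain ⟨r2, hr2⟩ := mySqrt (b - p2 * (2 * d - μ12 * a * p2))
    exact ⟨1, p2, p3, a, 2 * d - μ12 * a * p2, 2 * e - μ13 * a * p3, 0, r2, 0,
      by ring, by linear_combination hr2, by linear_combination -hroot, by ring, by ring,
      by linear_combination hp2⟩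
  · obtain ⟨r2, hr2⟩ := mySqrt b
    exact ⟨1, 0, p3, a, 2 * d, 2 * e - μ13 * a * p3, 0, r2, 0,
      by ring, by linear_combination hr2, by linear_combination -hroot, by ring, by ring,
      by linear_combination hres⟩

/-- Main auxiliary: the case `a ≠ 0`, `e ≠ 0`. -/
lemma auxMain {k : Type*} [Field k] [IsAlgClosed k]
    (h2 : (2 : k) ≠ 0) (μ12 μ13 μ23 : k)
    (hμ12 : μ12 ≠ 0) (hμ13 : μ13 ≠ 0) (hμ23 : μ23 ≠ 0)
    (a b c d e f : k) (ha : a ≠ 0) (he : e ≠ 0) :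
    Sol μ12 μ13 μ23 a b c d e f := by
  have hμ13a : μ13 * a ≠ 0 := mul_ne_zero hμ13 ha
  have h2e : 2 * e ≠ 0 := mul_ne_zero h2 he
  by_cases hσ : μ13 + μ12 * μ23 = 0
  · obtain ⟨p3, hp3⟩ := quadRoot h2 (μ13 * a) (-(2 * e)) c hμ13a
    refine planB μ12 μ13 μ23 a b c d e f p3 (by linear_combination hp3) (Or.inl ?_)
    rw [hσ]
    simpa using h2e
  · have hσa : (μ13 + μ12 * μ23) * a ≠ 0 := mul_ne_zero hσ ha
    obtain ⟨p30, hp30⟩ : ∃ p30 : k, (μ13 + μ12 * μ23) * a * p30 = 2 * e :=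
      ⟨2 * e / ((μ13 + μ12 * μ23) * a), mul_div_cancel₀ _ hσa⟩
    by_cases hr0 : μ13 * a * p30 ^ 2 - 2 * e * p30 + c = 0
    · obtain ⟨p31, hp31⟩ : ∃ p31 : k, μ13 * a * p31 = 2 * e - μ13 * a * p30 :=
        ⟨(2 * e - μ13 * a * p30) / (μ13 * a), by field_simp⟩
      by_cases h31 : p31 = p30
      · by_cases hres : 2 * μ23 * d * p30 = 2 * f
        · exact planB μ12 μ13 μ23 a b c d e f p30 hr0 (Or.inr hres)
        · -- hard case
          have hkey : μ13 * a * p30 = e := by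
            rw [h31] at hp31
            refine mul_left_cancel₀ h2 ?_
            linear_combination hp31
          have hap : a * p30 ≠ 0 := by
            intro h0
            rw [show (μ13 + μ12 * μ23) * a * p30 = (μ13 + μ12 * μ23) * (a * p30) by ring,
              h0, mul_zero] at hp30
            exact h2e hp30.symm
          have hμeq : μ12 * μ23 = μ13 := by
            have h'' : (μ12 * μ23 - μ13) * (a * p30) = 0 := by
              linear_combination hp30 - 2 * hkey
            have := (mul_eq_zero.mp h'').resolve_right hap
            linear_combination this
          have hc2 : μ13 * a * c = e ^ 2 := by
            have hT : μ13 * a * (μ13 * a * p30 ^ 2 - 2 * e * p30 + c) = 0 := by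
              rw [hr0]; ring
            linear_combination hT - (μ13 * a * p30 - e) * hkey
          have hc3 : μ12 * μ23 * a * c = e ^ 2 := by
            linear_combination hc2 + a * c * hμeq
          have hcne : c ≠ 0 := by
            intro h0
            rw [h0, mul_zero] at hc2
            exact pow_ne_zero 2 he hc2.symm
          obtain ⟨γ, hγ⟩ := mySqrt c
          have hγne : γ ≠ 0 := by
            intro h0; rw [h0] at hγ; simp at hγ; exact hcne hγ.symm
          by_cases hm1 : μ23 = -1
          · obtain ⟨r2, hr2⟩ := mySqrt (b - f / e * (2 * d - μ12 * a * (f / e)))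
            refine ⟨1, f / e, 0, a, 2 * d - μ12 * a * (f / e), 2 * e, 0, r2, γ,
              by ring, by linear_combination hr2, by linear_combination hγ, by ring, by ring, ?_⟩
            rw [hm1]
            field_simp
            ring
          · have h1μ : (1 + μ23) ≠ 0 := fun h0 => hm1 (by linear_combination h0)
            have hAB : (4 * e ^ 2 - μ12 * a * ((1 + μ23) ^ 2 * c)) ≠ 0 ∨
                (2 * d * ((1 + μ23) ^ 2 * c) - 8 * e * f) ≠ 0 := by
              by_cases hone : μ23 = 1
              · refine Or.inr fun h0 => hres ?_
                subst hone
                have h8e : (8 : k) * e ≠ 0 := by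
                  have : (8 : k) = 2 * 2 * 2 := by norm_num
                  rw [this]; exact mul_ne_zero (mul_ne_zero (mul_ne_zero h2 h2) h2) he
                have hde : 8 * e * (d * e - f * (μ13 * a)) = 0 := by
                  linear_combination (μ13 * a) * h0 - 8 * d * hc2
                have hde' : d * e - f * (μ13 * a) = 0 :=
                  (mul_eq_zero.mp hde).resolve_left h8e
                have hfin : μ13 * a * (2 * 1 * d * p30 - 2 * f) = 0 := by
                  linear_combination 2 * d * hkey + 2 * hde'
                have := (mul_eq_zero.mp hfin).resolve_left hμ13a
                linear_combination this
              · refine Or.inl fun h0 => ?_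
                have hfac : e ^ 2 * (1 - μ23) ^ 2 = 0 := by
                  linear_combination -μ23 * h0 - (1 + μ23) ^ 2 * hc3
                rcases mul_eq_zero.mp hfac with h | h
                · exact pow_ne_zero 2 he h
                · have h' := pow_eq_zero_iff (n := 2) (by norm_num) |>.mp h
                  exact hone (by linear_combination -h')
            obtain ⟨p2, hp2⟩ := quadOrLinRoot h2 _ _ (4 * f ^ 2 - b * ((1 + μ23) ^ 2 * c)) hAB
            obtain ⟨r2, hr2⟩ : ∃ r2 : k, r2 * ((1 + μ23) * γ) = 2 * f - 2 * e * p2 :=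
              ⟨_, div_mul_cancel₀ _ (mul_ne_zero h1μ hγne)⟩
            refine ⟨1, p2, 0, a, 2 * d - μ12 * a * p2, 2 * e, 0, r2, γ,
              by ring, ?_, by linear_combination hγ, by ring, by ring, by linear_combination hr2⟩
            have hr2sq : r2 ^ 2 * ((1 + μ23) ^ 2 * c) = (2 * f - 2 * e * p2) ^ 2 := by
              calc r2 ^ 2 * ((1 + μ23) ^ 2 * c)
                  = (r2 * ((1 + μ23) * γ)) ^ 2 := by rw [← hγ]; ring
                _ = (2 * f - 2 * e * p2) ^ 2 := by rw [hr2]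
            have hΛ : (1 + μ23) ^ 2 * c ≠ 0 := mul_ne_zero (pow_ne_zero 2 h1μ) hcne
            have hGΛ : (p2 * (2 * d - μ12 * a * p2) + r2 ^ 2 - b) * ((1 + μ23) ^ 2 * c) = 0 := by
              linear_combination hp2 + hr2sq
            have := (mul_eq_zero.mp hGΛ).resolve_right hΛ
            linear_combination this
      · -- p31 ≠ p30 : p31 is a root with M ≠ 0
        have hsq : μ13 * a * (μ13 * a * p31 ^ 2 - 2 * e * p31 + c)
            = μ13 * a * (μ13 * a * p30 ^ 2 - 2 * e * p30 + c) := by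
          linear_combination (μ13 * a * (p31 - p30)) * hp31
        rw [hr0, mul_zero] at hsq
        have hroot31 := (mul_eq_zero.mp hsq).resolve_left hμ13a
        refine planB μ12 μ13 μ23 a b c d e f p31 hroot31 (Or.inl fun hM0 => h31 ?_)
        refine mul_left_cancel₀ hσa ?_
        rw [hp30]
        linear_combination -hM0
    · -- p30 is not a root: any root works
      obtain ⟨p3, hp3⟩ := quadRoot h2 (μ13 * a) (-(2 * e)) c hμ13a
      have hp3' : μ13 * a * p3 ^ 2 - 2 * e * p3 + c = 0 := by linear_combination hp3
      refine planB μ12 μ13 μ23 a b c d e f p3 hp3' (Or.inl fun hM0 => hr0 ?_)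
      have hpe : (μ13 + μ12 * μ23) * a * p3 = 2 * e := by linear_combination -hM0
      have h30 : p3 = p30 := mul_left_cancel₀ hσa (by rw [hpe, hp30])
      rw [← h30]
      exact hp3'

/-- Binary factorization: b z2² + c z3² + 2f z2z3 = (p2z2+p3z3)(q2z2+q3z3). -/
lemma binFactor {k : Type*} [Field k] [IsAlgClosed k] (h2 : (2:k) ≠ 0)
    (μ : k) (hμ : μ ≠ 0) (b c f : k) :
    ∃ p2 p3 q2 q3 : k, p2 * q2 = b ∧ p3 * q3 = c ∧ p2 * q3 + μ * p3 * q2 = 2 * f := by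
  by_cases hb : b = 0
  · exact ⟨2 * f, c, 0, 1, by rw [hb]; ring, by ring, by ring⟩
  · obtain ⟨x, hx⟩ := quadRoot h2 (μ * b) (-(2 * f)) c (mul_ne_zero hμ hb)
    exact ⟨1, x, b, 2 * f - μ * b * x, by ring, by linear_combination -hx, by ring⟩

theorem productPlusSquare {k : Type*} [Field k] [IsAlgClosed k]
    (h2 : (2 : k) ≠ 0) (μ12 μ13 μ23 : k)
    (hμ12 : μ12 ≠ 0) (hμ13 : μ13 ≠ 0) (hμ23 : μ23 ≠ 0)
    (a b c d e f : k) :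
    ∃ p1 p2 p3 q1 q2 q3 r1 r2 r3 : k,
      p1 * q1 + r1 ^ 2 = a ∧
      p2 * q2 + r2 ^ 2 = b ∧
      p3 * q3 + r3 ^ 2 = c ∧
      p1 * q2 + μ12 * p2 * q1 + (1 + μ12) * r1 * r2 = 2 * d ∧
      p1 * q3 + μ13 * p3 * q1 + (1 + μ13) * r1 * r3 = 2 * e ∧
      p2 * q3 + μ23 * p3 * q2 + (1 + μ23) * r2 * r3 = 2 * f := by
  by_cases hde : d = 0 ∧ e = 0
  · obtain ⟨hd, he⟩ := hde
    obtain ⟨r1, hr1⟩ := mySqrt a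
    obtain ⟨p2, p3, q2, q3, hb, hc, hf⟩ := binFactor h2 μ23 hμ23 b c f
    exact ⟨0, p2, p3, 0, q2, q3, r1, 0, 0,
      by linear_combination hr1, by linear_combination hb, by linear_combination hc,
      by rw [hd]; ring, by rw [he]; ring, by linear_combination hf⟩
  · by_cases ha : a = 0
    · by_cases hd : d = 0
      · have he : e ≠ 0 := fun h => hde ⟨hd, h⟩
        obtain ⟨r2, hr2⟩ := mySqrt b
        refine ⟨1, f / e, c / (2 * e), 0, 0, 2 * e, 0, r2, 0,
          by rw [ha]; ring, by linear_combination hr2, ?_, by rw [hd]; ring, by ring, ?_⟩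
        · field_simp; ring
        · field_simp
          ring
      · obtain ⟨r3, hr3⟩ := mySqrt (c - 2 * e * ((f - e * (b / (2 * d))) / (μ23 * d)))
        refine ⟨1, b / (2 * d), (f - e * (b / (2 * d))) / (μ23 * d), 0, 2 * d, 2 * e, 0, 0, r3,
          by rw [ha]; ring, ?_, by linear_combination hr3, by ring, by ring, ?_⟩
        · field_simp; ring
        · field_simp
          ring
    · by_cases he : e = 0
      · have hd : d ≠ 0 := fun h => hde ⟨h, he⟩
        obtain ⟨p1, p2, p3, q1, q2, q3, r1, r2, r3, g1, g2, g3, g4, g5, g6⟩ :=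
          auxMain h2 μ13 μ12 μ23⁻¹ hμ13 hμ12 (inv_ne_zero hμ23) a c b e d (f / μ23) ha hd
        refine ⟨p1, p3, p2, q1, q3, q2, r1, r3, r2, g1, g3, g2, g5, g4, ?_⟩
        field_simp at g6
        linear_combination g6
      · exact auxMain h2 μ12 μ13 μ23 hμ12 hμ13 hμ23 a b c d e f ha he
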